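/- Define the territory T(p/q) of a positive irreducible fraction p/q with p even and standard expansion [a_0,...,a_n] as the open interval with endpoints [a_0,...,a_{n-1}, a_n - 1] and [a_0,...,a_{n-1}, ∞] = [a_0,...,a_{n-1}] (ordered appropriately depending on the parity of n). Then p/q ∈ T(p/q), every child of p/q lies in T(p/q), and M(p/q) ∉ T(p/q). -/

import Mathlib

/-- Evaluate the continued fraction `[a_0, …, a_{n-1}, x]` projectively:
the pair `(u, w)` represents the fraction `u/w` (with `(±1, 0)` representing
`∞`), and `[a, rest] = a + 1/rest` corresponds to `(u,w) ↦ (a*u + w, u)`. -/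
def cfFold (l : List ℤ) (x : ℤ × ℤ) : ℤ × ℤ :=
  l.foldr (fun a y => (a * y.1 + y.2, y.1)) x

/-- The coprime pair `(numerator, denominator)` of the continued fraction
`[a_0, …, a_n]`; the empty continued fraction is `∞ = (1, 0)`. -/
def cfPair (l : List ℤ) : ℤ × ℤ :=
  cfFold l (1, 0)

/-- The rational number represented by a pair. -/
def pairQ (x : ℤ × ℤ) : ℚ :=
  (x.1 : ℚ) / (x.2 : ℚ)

/-- The value of the continued fraction `[a_0, …, a_n]` as a rational number. -/
def cfVal (l : List ℤ) : ℚ :=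
  pairQ (cfPair l)

/-- `l = [a_0, …, a_n]` is a standard continued fraction expansion:
`a_0 ≥ 0`, `a_i ≥ 1` for `1 ≤ i ≤ n`, and `a_n ≥ 2`. -/
def IsStdCF (l : List ℤ) : Prop :=
  l ≠ [] ∧ 0 ≤ l.head! ∧ (∀ b ∈ l.tail, 1 ≤ b) ∧ 2 ≤ l.getLast!

/-- The coprime-up-to-sign pair representing the continued fraction
`[a_0, …, a_{n-1}, a_n + 2/t]` with rational last entry
`a + 2/t = (a*t + 2)/t` (for odd `t` the pair `(a*t + 2, t)` is coprime). -/
def childPair (l : List ℤ) (a t : ℤ) : ℤ × ℤ :=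
  cfFold l (a * t + 2, t)

/-- The open interval of rationals between the fractions represented by the
pairs `P` and `Q` (ordered appropriately); if one endpoint is `∞`
(denominator `0`), the interval is unbounded above. -/
def pairItv (P Q : ℤ × ℤ) : Set ℚ :=
  if P.2 = 0 then Set.Ioi (pairQ Q)
  else if Q.2 = 0 then Set.Ioi (pairQ P)
  else Set.Ioo (min (pairQ P) (pairQ Q)) (max (pairQ P) (pairQ Q))

/-- The territory `T(p/q)` of a fraction with standard continued fraction
expansion `l ++ [a]`: the open interval with endpoints
`[a_0, …, a_{n-1}, a_n - 1]` and `[a_0, …, a_{n-1}, ∞] = [a_0, …, a_{n-1}]`. -/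
def territory (l : List ℤ) (a : ℤ) : Set ℚ :=
  pairItv (cfFold l (a - 1, 1)) (cfPair l)

/-- The territory of the child `[a_0, …, a_{n-1}, a_n + 2/t]` of
`l ++ [a]`: the open interval with endpoints
`[a_0, …, a_{n-1}, a_n + 2/(t+1)]` and `[a_0, …, a_{n-1}, a_n + 2/(t-1)]`. -/
def childTerritory (l : List ℤ) (a t : ℤ) : Set ℚ :=
  pairItv (cfFold l (a * (t + 1) + 2, t + 1)) (cfFold l (a * (t - 1) + 2, t - 1))
lemma cfFold_cons (b : ℤ) (l : List ℤ) (x : ℤ × ℤ) :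
    cfFold (b :: l) x = (b * (cfFold l x).1 + (cfFold l x).2, (cfFold l x).1) := rfl

lemma cfFold_append (l l' : List ℤ) (x : ℤ × ℤ) :
    cfFold (l ++ l') x = cfFold l (cfFold l' x) := List.foldr_append

lemma cfFold_linear (l : List ℤ) (u w : ℤ) :
    cfFold l (u, w) = (u * (cfFold l (1,0)).1 + w * (cfFold l (0,1)).1,
                       u * (cfFold l (1,0)).2 + w * (cfFold l (0,1)).2) := by
  induction l with
  | nil => simp [cfFold]
  | cons b l ih =>
      simp only [cfFold_cons, ih, Prod.ext_iff]
      exact ⟨by ring, trivial⟩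

lemma cfFold_det (l : List ℤ) :
    (cfFold l (1,0)).1 * (cfFold l (0,1)).2 - (cfFold l (0,1)).1 * (cfFold l (1,0)).2
      = (-1) ^ l.length := by
  induction l with
  | nil => simp [cfFold]
  | cons b l ih =>
      simp only [cfFold_cons, List.length_cons, pow_succ]
      linear_combination (-1 : ℤ) * ih

lemma cf_pos_tail (l : List ℤ) (h : ∀ b ∈ l, 1 ≤ b) :
    1 ≤ (cfFold l (1,0)).1 ∧ 0 ≤ (cfFold l (0,1)).1 ∧ 0 ≤ (cfFold l (1,0)).2 ∧
      0 ≤ (cfFold l (0,1)).2 ∧ (l ≠ [] → 1 ≤ (cfFold l (0,1)).1) := by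
  induction l with
  | nil => simp [cfFold]
  | cons b l ih =>
      have hb : 1 ≤ b := h b (List.mem_cons_self)
      obtain ⟨h1, h2, h3, h4, h5⟩ := ih (fun c hc => h c (List.mem_cons_of_mem _ hc))
      simp only [cfFold_cons]
      refine ⟨by nlinarith, by nlinarith, by linarith, by linarith, fun _ => ?_⟩
      rcases eq_or_ne l [] with rfl | hne
      · simp [cfFold]
      · have := h5 hne; nlinarith

lemma cf_pos (l : List ℤ) (hl : l ≠ []) (h0 : 0 ≤ l.head!) (h1 : ∀ b ∈ l.tail, 1 ≤ b) :
    0 ≤ (cfFold l (1,0)).1 ∧ 0 ≤ (cfFold l (0,1)).1 ∧ 1 ≤ (cfFold l (1,0)).2 ∧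
      0 ≤ (cfFold l (0,1)).2 ∧ (l.tail ≠ [] → 1 ≤ (cfFold l (0,1)).2) := by
  obtain ⟨b, l', rfl⟩ := List.exists_cons_of_ne_nil hl
  simp only [List.head!_cons, List.tail_cons] at h0 h1 ⊢
  obtain ⟨h2, h3, h4, h5, h6⟩ := cf_pos_tail l' h1
  simp only [cfFold_cons]
  exact ⟨by nlinarith, by nlinarith, h2, h3, fun hne => h6 hne⟩

lemma key_mem (A B C D a u w : ℚ) (hC : 1 ≤ C) (hD : 0 ≤ D)
    (hdet : A*D - B*C = 1 ∨ A*D - B*C = -1) (ha : 2 ≤ a) (hw : 1 ≤ w)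
    (hu : (a-1)*w < u) :
    (u*A + w*B)/(u*C + w*D) ∈
      Set.Ioo (min (((a-1)*A+B)/((a-1)*C+D)) (A/C))
              (max (((a-1)*A+B)/((a-1)*C+D)) (A/C)) := by
  have hC0 : (0:ℚ) < C := by linarith
  have hu0 : (0:ℚ) < u := by nlinarith
  have hdv : (0:ℚ) < u*C + w*D := by nlinarith
  have hd1 : (0:ℚ) < (a-1)*C + D := by nlinarith
  have key1 : (u*A+w*B)*((a-1)*C+D) - ((a-1)*A+B)*(u*C+w*D)
      = (u - (a-1)*w) * (A*D - B*C) := by ring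
  have key2 : A*(u*C+w*D) - (u*A+w*B)*C = w * (A*D - B*C) := by ring
  rcases hdet with hd | hd <;> rw [hd] at key1 key2
  · have h1 : ((a-1)*A+B)/((a-1)*C+D) < (u*A+w*B)/(u*C+w*D) := by
      rw [div_lt_div_iff₀ hd1 hdv]; nlinarith
    have h2 : (u*A+w*B)/(u*C+w*D) < A/C := by
      rw [div_lt_div_iff₀ hdv hC0]; nlinarith
    exact ⟨lt_of_le_of_lt (min_le_left _ _) h1, lt_of_lt_of_le h2 (le_max_right _ _)⟩
  · have h1 : (u*A+w*B)/(u*C+w*D) < ((a-1)*A+B)/((a-1)*C+D) := by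
      rw [div_lt_div_iff₀ hdv hd1]; nlinarith
    have h2 : A/C < (u*A+w*B)/(u*C+w*D) := by
      rw [div_lt_div_iff₀ hC0 hdv]; nlinarith
    exact ⟨lt_of_le_of_lt (min_le_right _ _) h2, lt_of_lt_of_le h1 (le_max_left _ _)⟩

lemma mem_territory_of (l : List ℤ) (hl : l ≠ []) (h0 : 0 ≤ l.head!)
    (h1 : ∀ b ∈ l.tail, 1 ≤ b) (a : ℤ) (ha : 2 ≤ a) (u w : ℤ) (hw : 1 ≤ w)
    (hu : (a-1)*w < u) :
    pairQ (cfFold l (u, w)) ∈ territory l a := by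
  obtain ⟨hA, hB, hC, hD, _⟩ := cf_pos l hl h0 h1
  set A := (cfFold l (1,0)).1 with hAdef
  set B := (cfFold l (0,1)).1 with hBdef
  set C := (cfFold l (1,0)).2 with hCdef
  set D := (cfFold l (0,1)).2 with hDdef
  have hdet : A*D - B*C = 1 ∨ A*D - B*C = -1 := by
    have := cfFold_det l
    rcases Nat.even_or_odd l.length with he | he
    · left; rw [← hAdef, ← hBdef, ← hCdef, ← hDdef] at this; rw [this, he.neg_one_pow]
    · right; rw [← hAdef, ← hBdef, ← hCdef, ← hDdef] at this; rw [this, he.neg_one_pow]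
  have hd1 : (a-1)*C + 1*D ≠ 0 := by nlinarith
  have hC0 : C ≠ 0 := by omega
  unfold territory pairItv cfPair
  rw [cfFold_linear l u w, cfFold_linear l (a-1) 1]
  simp only [← hAdef, ← hBdef, ← hCdef, ← hDdef, if_neg hd1, if_neg hC0]
  have := key_mem (A:ℚ) B C D a u w (by exact_mod_cast hC) (by exact_mod_cast hD)
    (hdet.imp (fun h => by exact_mod_cast h) (fun h => by exact_mod_cast h))
    (by exact_mod_cast ha) (by exact_mod_cast hw) (by exact_mod_cast hu)
  convert this using 3 <;> simp [pairQ] <;> push_cast <;> ring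

lemma key_not_mem (A B C D a : ℚ) (hA : 0 ≤ A) (hB : 0 ≤ B) (hC : 1 ≤ C) (hD : 0 ≤ D)
    (hdet : A*D - B*C = 1 ∨ A*D - B*C = -1) (ha : 2 ≤ a) :
    ((a-2)*A+B)/((a-2)*C+D) ∉
      Set.Ioo (min (((a-1)*A+B)/((a-1)*C+D)) (A/C))
              (max (((a-1)*A+B)/((a-1)*C+D)) (A/C)) := by
  have hC0 : (0:ℚ) < C := by linarith
  have hd1 : (0:ℚ) < (a-1)*C + D := by nlinarith
  have hdm0 : (0:ℚ) ≤ (a-2)*C + D := by nlinarith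
  rcases eq_or_lt_of_le hdm0 with hdm | hdm
  · have hv0 : ((a-2)*A+B)/((a-2)*C+D) = 0 := by rw [← hdm, div_zero]
    have hq1 : (0:ℚ) ≤ ((a-1)*A+B)/((a-1)*C+D) := div_nonneg (by nlinarith) hd1.le
    have hq2 : (0:ℚ) ≤ A/C := div_nonneg hA hC0.le
    intro hmem
    have h := hmem.1
    have hmin : (0:ℚ) ≤ min (((a-1)*A+B)/((a-1)*C+D)) (A/C) := le_min hq1 hq2
    rw [hv0] at h; linarith
  · have key1 : ((a-1)*A+B)*((a-2)*C+D) - ((a-2)*A+B)*((a-1)*C+D) = A*D - B*C := by ring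
    have key2 : A*((a-1)*C+D) - ((a-1)*A+B)*C = A*D - B*C := by ring
    rcases hdet with hd | hd <;> rw [hd] at key1 key2 <;> intro hmem
    · have h1 : ((a-2)*A+B)/((a-2)*C+D) < ((a-1)*A+B)/((a-1)*C+D) := by
        rw [div_lt_div_iff₀ hdm hd1]; linarith
      have h2 : ((a-1)*A+B)/((a-1)*C+D) < A/C := by
        rw [div_lt_div_iff₀ hd1 hC0]; linarith
      have h := hmem.1; rw [min_eq_left h2.le] at h; linarith
    · have h1 : ((a-1)*A+B)/((a-1)*C+D) < ((a-2)*A+B)/((a-2)*C+D) := by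
        rw [div_lt_div_iff₀ hd1 hdm]; linarith
      have h2 : A/C < ((a-1)*A+B)/((a-1)*C+D) := by
        rw [div_lt_div_iff₀ hC0 hd1]; linarith
      have h := hmem.2; rw [max_eq_left h2.le] at h; linarith

lemma mother_not_mem (l : List ℤ) (hl : l ≠ []) (h0 : 0 ≤ l.head!)
    (h1 : ∀ b ∈ l.tail, 1 ≤ b) (a : ℤ) (ha : 2 ≤ a) :
    pairQ (cfFold l (a-2, 1)) ∉ territory l a := by
  obtain ⟨hA, hB, hC, hD, _⟩ := cf_pos l hl h0 h1
  set A := (cfFold l (1,0)).1 with hAdef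
  set B := (cfFold l (0,1)).1 with hBdef
  set C := (cfFold l (1,0)).2 with hCdef
  set D := (cfFold l (0,1)).2 with hDdef
  have hdet : A*D - B*C = 1 ∨ A*D - B*C = -1 := by
    have := cfFold_det l
    rcases Nat.even_or_odd l.length with he | he
    · left; rw [← hAdef, ← hBdef, ← hCdef, ← hDdef] at this; rw [this, he.neg_one_pow]
    · right; rw [← hAdef, ← hBdef, ← hCdef, ← hDdef] at this; rw [this, he.neg_one_pow]
  have hd1 : (a-1)*C + 1*D ≠ 0 := by nlinarith
  have hC0 : C ≠ 0 := by omega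
  unfold territory pairItv cfPair
  rw [cfFold_linear l (a-2) 1, cfFold_linear l (a-1) 1]
  simp only [← hAdef, ← hBdef, ← hCdef, ← hDdef, if_neg hd1, if_neg hC0]
  have := key_not_mem (A:ℚ) B C D a (by exact_mod_cast hA) (by exact_mod_cast hB)
    (by exact_mod_cast hC) (by exact_mod_cast hD)
    (hdet.imp (fun h => by exact_mod_cast h) (fun h => by exact_mod_cast h))
    (by exact_mod_cast ha)
  convert this using 3 <;> simp [pairQ] <;> push_cast <;> ring

lemma pairQ_cfFold_neg (l : List ℤ) (u w : ℤ) :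
    pairQ (cfFold l (-u, -w)) = pairQ (cfFold l (u, w)) := by
  rw [cfFold_linear l (-u) (-w), cfFold_linear l u w]
  simp only [pairQ]
  push_cast
  rw [show ((-u:ℚ) * (cfFold l (1,0)).1 + (-w) * (cfFold l (0,1)).1)
        = -((u:ℚ) * (cfFold l (1,0)).1 + w * (cfFold l (0,1)).1) by ring,
     show ((-u:ℚ) * (cfFold l (1,0)).2 + (-w) * (cfFold l (0,1)).2)
        = -((u:ℚ) * (cfFold l (1,0)).2 + w * (cfFold l (0,1)).2) by ring]
  exact neg_div_neg_eq _ _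

lemma getLast!_append_singleton (l : List ℤ) (a : ℤ) : (l ++ [a]).getLast! = a := by
  cases l with
  | nil => rfl
  | cons b l' =>
    show List.getLast ((b::l') ++ [a]) (by simp) = a
    exact List.getLast_append _

/-- Let `p/q` be a positive irreducible fraction with `p` even and standard
continued fraction expansion `l ++ [a]`.  Then `p/q` lies in its territory,
every child `[a_0, …, a_{n-1}, a_n + 2/t]` (odd `t ≠ -1`) lies in the
territory, and the mother `M(p/q) = [a_0, …, a_{n-1}, a_n - 2]` does not. -/
theorem territory_mem (p q : ℤ) (hp : 0 < p) (hq : 0 < q)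
    (hco : Int.gcd p q = 1) (hev : 2 ∣ p)
    (l : List ℤ) (a : ℤ) (hstd : IsStdCF (l ++ [a]))
    (hval : cfPair (l ++ [a]) = (p, q)) :
    (p : ℚ) / q ∈ territory l a ∧
    (∀ t : ℤ, Odd t → t ≠ -1 → pairQ (childPair l a t) ∈ territory l a) ∧
    cfVal (l ++ [a - 2]) ∉ territory l a := by
  obtain ⟨-, hh, ht, hg⟩ := hstd
  have ha : 2 ≤ a := by rwa [getLast!_append_singleton] at hg
  have hval' : cfFold l (a, 1) = (p, q) := by
    rw [← hval, cfPair, cfFold_append]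
    congr 1
    simp [cfFold]
  have hmother : cfVal (l ++ [a - 2]) = pairQ (cfFold l (a - 2, 1)) := by
    rw [cfVal, cfPair, cfFold_append]
    congr 1
    simp [cfFold]
  rcases eq_or_ne l [] with rfl | hl
  · have hterr : territory [] a = Set.Ioi ((a : ℚ) - 1) := by
      unfold territory pairItv cfPair cfFold pairQ
      norm_num
    have hpa : a = p ∧ 1 = q := by
      simpa [cfFold, Prod.ext_iff] using hval'
    refine ⟨?_, ?_, ?_⟩
    · rw [hterr, ← hpa.1, ← hpa.2]
      simp only [Set.mem_Ioi]
      norm_num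
    · intro t hodd hne
      obtain ⟨k, hk⟩ := hodd
      have hchild : pairQ (childPair [] a t) = ((a*t+2 : ℤ) : ℚ) / (t : ℤ) := rfl
      rw [hterr, hchild, Set.mem_Ioi]
      rcases lt_or_gt_of_ne (show t ≠ 0 by omega) with htn | htp
      · have ht3 : t ≤ -3 := by omega
        rw [lt_div_iff_of_neg (by exact_mod_cast htn : ((t:ℤ):ℚ) < 0)]
        have key : a*t+2 < ((a:ℤ)-1)*t := by
          have h' : (a-1)*t - (a*t+2) = -t-2 := by ring
          linarith
        exact_mod_cast key
      · rw [lt_div_iff₀ (by exact_mod_cast htp : (0:ℚ) < ((t:ℤ):ℚ))]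
        have key : ((a:ℤ)-1)*t < a*t+2 := by
          have h' : a*t+2 - (a-1)*t = t+2 := by ring
          linarith
        exact_mod_cast key
    · rw [hterr, hmother]
      have : pairQ (cfFold ([] : List ℤ) (a - 2, 1)) = ((a : ℚ) - 2) := by
        simp [cfFold, pairQ]
      rw [this]
      simp only [Set.mem_Ioi, not_lt]
      linarith
  · have hh' : 0 ≤ l.head! := by
      obtain ⟨b, l', rfl⟩ := List.exists_cons_of_ne_nil hl
      simpa using hh
    have ht' : ∀ b ∈ l.tail, 1 ≤ b := by
      obtain ⟨b, l', rfl⟩ := List.exists_cons_of_ne_nil hl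
      intro x hx
      exact ht x (by simpa using Or.inl hx)
    refine ⟨?_, ?_, ?_⟩
    · have : (p : ℚ) / q = pairQ (cfFold l (a, 1)) := by rw [hval']; rfl
      rw [this]
      exact mem_territory_of l hl hh' ht' a ha a 1 le_rfl (by linarith)
    · intro t hodd hne
      obtain ⟨k, hk⟩ := hodd
      show pairQ (cfFold l (a * t + 2, t)) ∈ territory l a
      rcases lt_or_gt_of_ne (show t ≠ 0 by omega) with htn | htp
      · have ht3 : t ≤ -3 := by omega
        rw [show (a * t + 2, t) = (-(-(a*t+2)), -(-t)) by simp, pairQ_cfFold_neg]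
        exact mem_territory_of l hl hh' ht' a ha (-(a*t+2)) (-t) (by omega) (by nlinarith)
      · exact mem_territory_of l hl hh' ht' a ha (a*t+2) t (by omega) (by nlinarith)
    · rw [hmother]
      exact mother_not_mem l hl hh' ht' a ha
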